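/- Let k be a nonzero commutative ring and V an abelian group. If an element e = Σ_{u∈V} λ(u)[u] of the group algebra k[V] is a nonzero idempotent such that for every v ∈ V there exists φ(v) ∈ k with [v]·e = φ(v)·e, then λ(u) ≠ 0 for all u ∈ V; in particular, if such an e exists then V is finite. -/

import Mathlib

theorem stmt_17 {k V : Type*} [CommRing k] [Nontrivial k] [AddCommGroup V]
    (x : AddMonoidAlgebra k V) (hidem : x * x = x) (hx : x ≠ 0)
    (h : ∀ v : V, ∃ c : k, (AddMonoidAlgebra.single v 1 : AddMonoidAlgebra k V) * x = c • x) :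
    (∀ u : V, x.coeff u ≠ 0) ∧ Finite V := by
  obtain ⟨w, hw⟩ : ∃ w, x.coeff w ≠ 0 := by
    by_contra hc
    push_neg at hc
    exact hx (AddMonoidAlgebra.ext (Finsupp.ext fun a => hc a))
  have key : ∀ u : V, x.coeff u ≠ 0 := by
    intro u hu
    obtain ⟨c, hc⟩ := h (u - w)
    have := congrArg (fun f : AddMonoidAlgebra k V => f.coeff u) hc
    simp only [AddMonoidAlgebra.coeff_single_mul_apply, one_mul] at this
    rw [show -(u - w) + u = w by abel, show (c • x).coeff u = c * x.coeff u from rfl, hu, mul_zero] at this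
    exact hw this
  refine ⟨key, ?_⟩
  have : (Set.univ : Set V).Finite := by
    apply Set.Finite.subset x.coeff.support.finite_toSet
    intro u _
    simpa [Finsupp.mem_support_iff] using key u
  exact Set.finite_univ_iff.mp this
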